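/- For d ≥ 1, ν ≥ 0, α > 0 with ν + 4dα > 0 and (ν, d) not both giving a divergent integrand, the function C(t) = (E²/(4π²d)) ∫_{[0,1]^d} (∂_{k¹} ω(k))² e^{−tγψ(k)} dk, with ω(k) = (ν + 4α Σ_j sin²(πk^j))^{1/2} and ψ(k) = 8 Σ_j sin²(πk^j) (d≥2), satisfies: if ν > 0 there exist constants 0 < c₁ ≤ c₂ with c₁ t^{−d/2−1} ≤ C(t) ≤ c₂ t^{−d/2−1} for all t ≥ 1. -/

import Mathlib

open MeasureTheory Real

set_option maxHeartbeats 2000000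


lemma sin_ge (x : ℝ) (hx : 0 ≤ x) (hx' : x ≤ 1/2) : 2*x ≤ Real.sin (π*x) := by
  have hπ := Real.pi_pos
  have h := Real.mul_le_sin (x := π*x) (by positivity) (by nlinarith)
  calc 2*x = 2/π * (π*x) := by field_simp
  _ ≤ sin (π*x) := h

lemma sin_sq_le (x : ℝ) (hx : 0 ≤ x) (hx' : x ≤ 1) : Real.sin (π*x)^2 ≤ (π*x)^2 := by
  have hπ := Real.pi_pos
  have h0 : 0 ≤ Real.sin (π*x) :=
    Real.sin_nonneg_of_nonneg_of_le_pi (by positivity) (by nlinarith)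
  exact pow_le_pow_left₀ h0 (Real.sin_le (by positivity)) 2

lemma sym_sin (x : ℝ) : Real.sin (π*(1-x)) = Real.sin (π*x) := by
  rw [show π*(1-x) = π - π*x by ring, Real.sin_pi_sub]

lemma sym_sin2 (x : ℝ) : Real.sin (2*π*(1-x))^2 = Real.sin (2*π*x)^2 := by
  rw [show 2*π*(1-x) = 2*π - 2*π*x by ring, Real.sin_sub, Real.sin_two_pi, Real.cos_two_pi]
  ring

-- core half-interval bounds
lemma core_half_g (γ t x : ℝ) (hγ : 0 < γ) (ht0 : 0 < t) (hx : 0 ≤ x) (hx' : x ≤ 1/2) :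
    Real.exp (-(t*(8*γ)) * Real.sin (π*x)^2) ≤ Real.exp (-(t*(32*γ)) * x^2) := by
  have h1 := sin_ge x hx hx'
  have h2 : (2*x)^2 ≤ Real.sin (π*x)^2 := pow_le_pow_left₀ (by linarith) h1 2
  apply Real.exp_le_exp.2
  nlinarith [mul_le_mul_of_nonneg_left h2 (by positivity : (0:ℝ) ≤ t*(8*γ))]

lemma core_half_f (γ t x : ℝ) (hγ : 0 < γ) (ht0 : 0 < t) (hx : 0 ≤ x) (hx' : x ≤ 1/2) :
    Real.sin (2*π*x)^2 * Real.exp (-(t*(8*γ)) * Real.sin (π*x)^2)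
      ≤ 4*π^2*x^2 * Real.exp (-(t*(32*γ)) * x^2) := by
  have hπ := Real.pi_pos
  have hs2 : Real.sin (2*π*x)^2 ≤ 4 * Real.sin (π*x)^2 := by
    rw [show 2*π*x = 2*(π*x) by ring, Real.sin_two_mul]
    nlinarith [Real.cos_sq_le_one (π*x), sq_nonneg (Real.sin (π*x))]
  have hs3 : Real.sin (π*x)^2 ≤ π^2*x^2 := by
    have := sin_sq_le x hx (by linarith)
    nlinarith
  calc Real.sin (2*π*x)^2 * Real.exp (-(t*(8*γ)) * Real.sin (π*x)^2)
      ≤ (4*π^2*x^2) * Real.exp (-(t*(8*γ)) * Real.sin (π*x)^2) := by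
        apply mul_le_mul_of_nonneg_right _ (Real.exp_pos _).le
        nlinarith
  _ ≤ 4*π^2*x^2 * Real.exp (-(t*(32*γ)) * x^2) := by
        apply mul_le_mul_of_nonneg_left (core_half_g γ t x hγ ht0 hx hx') (by positivity)
lemma icc_reflect (F : ℝ → ℝ) :
    ∫ x in Set.Icc (0:ℝ) 1, F (1-x) = ∫ x in Set.Icc (0:ℝ) 1, F x := by
  rw [MeasureTheory.integral_Icc_eq_integral_Ioc, MeasureTheory.integral_Icc_eq_integral_Ioc,
      ← intervalIntegral.integral_of_le zero_le_one, ← intervalIntegral.integral_of_le zero_le_one,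
      intervalIntegral.integral_comp_sub_left F 1]
  norm_num

lemma inv_sqrt_rpow (t : ℝ) (ht0 : 0 < t) : (Real.sqrt t)⁻¹ = t ^ (-(1:ℝ)/2) := by
  rw [Real.sqrt_eq_rpow, ← Real.rpow_neg ht0.le]
  norm_num

lemma inv_sqrt_cube (t : ℝ) (ht0 : 0 < t) : ((Real.sqrt t)^3)⁻¹ = t ^ (-(3:ℝ)/2) := by
  rw [Real.sqrt_eq_rpow, ← Real.rpow_natCast (t ^ ((1:ℝ)/2)) 3, ← Real.rpow_mul ht0.le,
    ← Real.rpow_neg ht0.le]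
  norm_num


lemma int_sq_gauss (b : ℝ) (hb : 0 < b) : Integrable (fun u : ℝ => u^2 * Real.exp (-b*u^2)) := by
  apply Integrable.mono' ((integrable_exp_neg_mul_sq (half_pos hb)).const_mul (2/b))
  · exact ((continuous_pow 2).mul (by continuity)).aestronglyMeasurable
  · filter_upwards with u
    have h1 : u^2 ≤ 2/b * Real.exp (b/2 * u^2) := by
      have h2 : b/2*u^2 ≤ Real.exp (b/2*u^2) := by
        nlinarith [Real.add_one_le_exp (b/2 * u^2)]
      rw [div_mul_eq_mul_div, le_div_iff₀ hb]
      nlinarith [Real.exp_pos (b/2*u^2)]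
    have h3 : ‖u ^ 2 * Real.exp (-b * u ^ 2)‖ = u^2 * Real.exp (-b*u^2) := by
      rw [Real.norm_eq_abs, abs_of_nonneg (by positivity)]
    rw [h3]
    calc u^2 * Real.exp (-b*u^2) ≤ (2/b * Real.exp (b/2*u^2)) * Real.exp (-b*u^2) :=
          mul_le_mul_of_nonneg_right h1 (Real.exp_pos _).le
    _ = 2/b * Real.exp (-(b/2) * u^2) := by rw [mul_assoc, ← Real.exp_add]; ring_nf

lemma gauss_scale (b t : ℝ) (n : ℕ) (ht : 1 ≤ t) :
    ∫ x : ℝ, x^n * Real.exp (-(t*b) * x^2)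
      = t ^ (-((n:ℝ)+1)/2) * ∫ u : ℝ, u^n * Real.exp (-b*u^2) := by
  have ht0 : (0:ℝ) < t := lt_of_lt_of_le one_pos ht
  set s := Real.sqrt t with hs_def
  have hs : 0 < s := Real.sqrt_pos.2 ht0
  have h4 := MeasureTheory.Measure.integral_comp_mul_left (fun u => u^n * Real.exp (-b*u^2)) s
  have key : ∀ x : ℝ, (s*x)^n * Real.exp (-b*(s*x)^2)
      = s^n * (x^n * Real.exp (-(t*b)*x^2)) := by
    intro x
    have h2 : -b*(s*x)^2 = -(t*b)*x^2 := by
      rw [mul_pow, hs_def, Real.sq_sqrt ht0.le]; ring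
    rw [mul_pow, h2]; ring
  simp only [key] at h4
  rw [MeasureTheory.integral_const_mul, smul_eq_mul, abs_of_pos (inv_pos.2 hs)] at h4
  have hsn : (0:ℝ) < s^n := pow_pos hs n
  have hpow : t ^ (-((n:ℝ)+1)/2) = (s^n * s)⁻¹ := by
    have h5 : s^n * s = t ^ (((n:ℝ)+1)/2) := by
      rw [hs_def, Real.sqrt_eq_rpow, ← pow_succ,
        ← Real.rpow_natCast (t ^ ((1:ℝ)/2)) (n+1), ← Real.rpow_mul ht0.le]
      push_cast; ring_nf
    rw [h5, ← Real.rpow_neg ht0.le]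
    congr 1; ring
  rw [hpow]
  apply mul_left_cancel₀ (ne_of_gt hsn)
  rw [h4]
  field_simp


lemma cont_g (a : ℝ) : Continuous (fun x : ℝ => Real.exp (a * Real.sin (π*x)^2)) :=
  Real.continuous_exp.comp (continuous_const.mul ((Real.continuous_sin.comp
    (continuous_const.mul continuous_id)).pow 2))

lemma oneD_B_upper (γ : ℝ) (hγ : 0 < γ) : ∃ CB : ℝ, 0 < CB ∧ ∀ t : ℝ, 1 ≤ t →
    (∫ x in Set.Icc (0:ℝ) 1, Real.exp (-(t*(8*γ)) * Real.sin (π*x)^2))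
      ≤ CB * t ^ (-(1:ℝ)/2) := by
  refine ⟨2 * ∫ u : ℝ, Real.exp (-(32*γ)*u^2), ?_, ?_⟩
  · rw [integral_gaussian]
    have : 0 < Real.sqrt (π / (32*γ)) := Real.sqrt_pos.2 (by positivity)
    linarith
  intro t ht
  have ht0 : (0:ℝ) < t := lt_of_lt_of_le one_pos ht
  have hb : (0:ℝ) < t*(32*γ) := by positivity
  set E1 : ℝ → ℝ := fun x => Real.exp (-(t*(32*γ)) * x^2) with hE1
  have hE1c : Continuous E1 :=
    Real.continuous_exp.comp (continuous_const.mul (continuous_pow 2))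
  have hE2c : Continuous (fun x : ℝ => E1 (1-x)) :=
    hE1c.comp (continuous_const.sub continuous_id)
  have hE1i : Integrable E1 := by
    have := integrable_exp_neg_mul_sq hb
    simpa [hE1] using this
  have step1 : (∫ x in Set.Icc (0:ℝ) 1, Real.exp (-(t*(8*γ)) * Real.sin (π*x)^2))
      ≤ ∫ x in Set.Icc (0:ℝ) 1, (E1 x + E1 (1-x)) := by
    apply setIntegral_mono_on
    · exact (cont_g (-(t*(8*γ)))).continuousOn.integrableOn_compact isCompact_Icc
    · exact (hE1c.add hE2c).continuousOn.integrableOn_compact isCompact_Icc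
    · exact measurableSet_Icc
    · rintro x ⟨hx0, hx1⟩
      rcases le_or_gt x (1/2) with h|h
      · have := core_half_g γ t x hγ ht0 hx0 h
        have h2 : 0 < E1 (1-x) := Real.exp_pos _
        simp only [hE1] at *; linarith
      · have hy := core_half_g γ t (1-x) hγ ht0 (by linarith) (by linarith)
        rw [sym_sin x] at hy
        have h2 : 0 < E1 x := Real.exp_pos _
        simp only [hE1] at *; linarith
  have step2 : ∫ x in Set.Icc (0:ℝ) 1, (E1 x + E1 (1-x))
      = (∫ x in Set.Icc (0:ℝ) 1, E1 x) + ∫ x in Set.Icc (0:ℝ) 1, E1 (1-x) := by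
    apply integral_add
    · exact hE1c.continuousOn.integrableOn_compact isCompact_Icc
    · exact hE2c.continuousOn.integrableOn_compact isCompact_Icc
  have step3 : ∫ x in Set.Icc (0:ℝ) 1, E1 (1-x) = ∫ x in Set.Icc (0:ℝ) 1, E1 x :=
    icc_reflect E1
  have step4 : (∫ x in Set.Icc (0:ℝ) 1, E1 x) ≤ ∫ x : ℝ, E1 x := by
    apply setIntegral_le_integral hE1i
    filter_upwards with x using (Real.exp_pos _).le
  have step5 : (∫ x : ℝ, E1 x) = t ^ (-(1:ℝ)/2) * ∫ u : ℝ, Real.exp (-(32*γ)*u^2) := by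
    have := gauss_scale (32*γ) t 0 ht
    simp only [pow_zero, one_mul, Nat.cast_zero, zero_add] at this
    simpa [hE1] using this
  calc (∫ x in Set.Icc (0:ℝ) 1, Real.exp (-(t*(8*γ)) * Real.sin (π*x)^2))
      ≤ _ := step1
  _ = 2 * ∫ x in Set.Icc (0:ℝ) 1, E1 x := by rw [step2, step3]; ring
  _ ≤ 2 * ∫ x : ℝ, E1 x := by linarith
  _ = 2 * (∫ u : ℝ, Real.exp (-(32*γ)*u^2)) * t ^ (-(1:ℝ)/2) := by rw [step5]; ring

lemma oneD_B_lower (γ : ℝ) (hγ : 0 < γ) : ∃ cB : ℝ, 0 < cB ∧ ∀ t : ℝ, 1 ≤ t →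
    cB * t ^ (-(1:ℝ)/2)
      ≤ ∫ x in Set.Icc (0:ℝ) 1, Real.exp (-(t*(8*γ)) * Real.sin (π*x)^2) := by
  refine ⟨Real.exp (-(8*γ*π^2)), Real.exp_pos _, ?_⟩
  intro t ht
  have ht0 : (0:ℝ) < t := lt_of_lt_of_le one_pos ht
  have hsq : 1 ≤ Real.sqrt t := by
    rw [show (1:ℝ) = Real.sqrt 1 by simp]
    exact Real.sqrt_le_sqrt ht
  set s : ℝ := (Real.sqrt t)⁻¹ with hs_def
  have hs0 : 0 < s := inv_pos.2 (by linarith)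
  have hs1 : s ≤ 1 := by
    rw [hs_def, inv_le_one₀ (by linarith)]; exact hsq
  have hgc := cont_g (-(t*(8*γ)))
  have key : ∀ x ∈ Set.Icc (0:ℝ) s,
      Real.exp (-(8*γ*π^2)) ≤ Real.exp (-(t*(8*γ)) * Real.sin (π*x)^2) := by
    rintro x ⟨hx0, hxs⟩
    apply Real.exp_le_exp.2
    have h1 : Real.sin (π*x)^2 ≤ (π*x)^2 := sin_sq_le x hx0 (le_trans hxs hs1)
    have hx2 : x^2 ≤ s^2 := pow_le_pow_left₀ hx0 hxs 2
    have hs2 : s^2 = t⁻¹ := by rw [hs_def, inv_pow, Real.sq_sqrt ht0.le]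
    have h3 : t * x^2 ≤ 1 := by
      rw [hs2] at hx2
      calc t * x^2 ≤ t * t⁻¹ := by nlinarith
      _ = 1 := mul_inv_cancel₀ ht0.ne'
    have hπ := Real.pi_pos
    nlinarith [mul_le_mul_of_nonneg_left h1 (show (0:ℝ) ≤ t*(8*γ) by positivity),
      mul_le_mul_of_nonneg_left h3 (show (0:ℝ) ≤ 8*γ*π^2 by positivity)]
  calc Real.exp (-(8*γ*π^2)) * t ^ (-(1:ℝ)/2) = s * Real.exp (-(8*γ*π^2)) := by
        rw [hs_def, inv_sqrt_rpow t ht0]; ring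
  _ = ∫ _x in Set.Icc (0:ℝ) s, Real.exp (-(8*γ*π^2)) := by
        rw [setIntegral_const, Real.volume_real_Icc_of_le hs0.le, smul_eq_mul]
        ring_nf
  _ ≤ ∫ x in Set.Icc (0:ℝ) s, Real.exp (-(t*(8*γ)) * Real.sin (π*x)^2) := by
        apply setIntegral_mono_on
          (integrableOn_const measure_Icc_lt_top.ne)
          (hgc.continuousOn.integrableOn_compact isCompact_Icc)
          measurableSet_Icc key
  _ ≤ ∫ x in Set.Icc (0:ℝ) 1, Real.exp (-(t*(8*γ)) * Real.sin (π*x)^2) := by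
        apply setIntegral_mono_set
          (hgc.continuousOn.integrableOn_compact isCompact_Icc)
          (ae_of_all _ (fun x => (Real.exp_pos _).le))
          ((Set.Icc_subset_Icc le_rfl hs1).eventuallyLE)

lemma cont_f (a : ℝ) :
    Continuous (fun x : ℝ => Real.sin (2*π*x)^2 * Real.exp (a * Real.sin (π*x)^2)) :=
  ((Real.continuous_sin.comp (continuous_const.mul continuous_id)).pow 2).mul (cont_g a)

lemma oneD_A_upper (γ : ℝ) (hγ : 0 < γ) : ∃ CA : ℝ, 0 ≤ CA ∧ ∀ t : ℝ, 1 ≤ t →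
    (∫ x in Set.Icc (0:ℝ) 1, Real.sin (2*π*x)^2 * Real.exp (-(t*(8*γ)) * Real.sin (π*x)^2))
      ≤ CA * t ^ (-(3:ℝ)/2) := by
  refine ⟨8*π^2 * ∫ u : ℝ, u^2 * Real.exp (-(32*γ)*u^2), ?_, ?_⟩
  · have h : (0:ℝ) ≤ ∫ u : ℝ, u^2 * Real.exp (-(32*γ)*u^2) :=
      integral_nonneg (fun u => by positivity)
    positivity
  intro t ht
  have ht0 : (0:ℝ) < t := lt_of_lt_of_le one_pos ht
  have hb : (0:ℝ) < t*(32*γ) := by positivity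
  set F : ℝ → ℝ := fun x => x^2 * Real.exp (-(t*(32*γ)) * x^2) with hF
  have hFc : Continuous F :=
    (continuous_pow 2).mul (Real.continuous_exp.comp (continuous_const.mul (continuous_pow 2)))
  have hF2c : Continuous (fun x : ℝ => F (1-x)) := hFc.comp (continuous_const.sub continuous_id)
  have hFi : Integrable F := int_sq_gauss (t*(32*γ)) hb
  have hπ := Real.pi_pos
  have step1 : (∫ x in Set.Icc (0:ℝ) 1,
        Real.sin (2*π*x)^2 * Real.exp (-(t*(8*γ)) * Real.sin (π*x)^2))
      ≤ ∫ x in Set.Icc (0:ℝ) 1, 4*π^2 * (F x + F (1-x)) := by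
    apply setIntegral_mono_on
    · exact (cont_f (-(t*(8*γ)))).continuousOn.integrableOn_compact isCompact_Icc
    · exact (continuous_const.mul (hFc.add hF2c)).continuousOn.integrableOn_compact isCompact_Icc
    · exact measurableSet_Icc
    · rintro x ⟨hx0, hx1⟩
      rcases le_or_gt x (1/2) with h|h
      · have h1 := core_half_f γ t x hγ ht0 hx0 h
        have h2 : 0 ≤ F (1-x) := by
          simp only [hF]; positivity
        simp only [hF] at *; nlinarith
      · have h1 := core_half_f γ t (1-x) hγ ht0 (by linarith) (by linarith)
        rw [sym_sin2, sym_sin] at h1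
        have h2 : 0 ≤ F x := by simp only [hF]; positivity
        simp only [hF] at *; nlinarith
  have step2 : ∫ x in Set.Icc (0:ℝ) 1, 4*π^2 * (F x + F (1-x))
      = 4*π^2 * ((∫ x in Set.Icc (0:ℝ) 1, F x) + ∫ x in Set.Icc (0:ℝ) 1, F (1-x)) := by
    rw [MeasureTheory.integral_const_mul, integral_add
      (hFc.continuousOn.integrableOn_compact isCompact_Icc)
      (hF2c.continuousOn.integrableOn_compact isCompact_Icc)]
  have step3 : ∫ x in Set.Icc (0:ℝ) 1, F (1-x) = ∫ x in Set.Icc (0:ℝ) 1, F x := icc_reflect F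
  have step4 : (∫ x in Set.Icc (0:ℝ) 1, F x) ≤ ∫ x : ℝ, F x := by
    apply setIntegral_le_integral hFi
    apply ae_of_all
    intro x
    simp only [hF]; positivity
  have step5 : (∫ x : ℝ, F x) = t ^ (-(3:ℝ)/2) * ∫ u : ℝ, u^2 * Real.exp (-(32*γ)*u^2) := by
    have h := gauss_scale (32*γ) t 2 ht
    have h32 : -(((2:ℕ):ℝ)+1)/2 = -(3:ℝ)/2 := by norm_num
    rw [h32] at h
    simpa [hF] using h
  calc (∫ x in Set.Icc (0:ℝ) 1,
        Real.sin (2*π*x)^2 * Real.exp (-(t*(8*γ)) * Real.sin (π*x)^2)) ≤ _ := step1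
  _ = 8*π^2 * ∫ x in Set.Icc (0:ℝ) 1, F x := by rw [step2, step3]; ring
  _ ≤ 8*π^2 * ∫ x : ℝ, F x := by nlinarith
  _ = 8*π^2 * (∫ u : ℝ, u^2 * Real.exp (-(32*γ)*u^2)) * t ^ (-(3:ℝ)/2) := by
      rw [step5]; ring

lemma oneD_A_lower (γ : ℝ) (hγ : 0 < γ) : ∃ cA : ℝ, 0 < cA ∧ ∀ t : ℝ, 1 ≤ t →
    cA * t ^ (-(3:ℝ)/2)
      ≤ ∫ x in Set.Icc (0:ℝ) 1,
          Real.sin (2*π*x)^2 * Real.exp (-(t*(8*γ)) * Real.sin (π*x)^2) := by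
  have hπ := Real.pi_pos
  refine ⟨Real.exp (-(γ*π^2/2))/12, by positivity, ?_⟩
  intro t ht
  have ht0 : (0:ℝ) < t := lt_of_lt_of_le one_pos ht
  have hsq : 1 ≤ Real.sqrt t := by
    rw [show (1:ℝ) = Real.sqrt 1 by simp]
    exact Real.sqrt_le_sqrt ht
  set s : ℝ := (4*Real.sqrt t)⁻¹ with hs_def
  have hs0 : 0 < s := inv_pos.2 (by linarith)
  have hs4 : s ≤ 1/4 := by
    rw [hs_def]
    rw [inv_le_comm₀ (by linarith) (by norm_num)]
    linarith
  have hs1 : s ≤ 1 := by linarith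
  have hfc := cont_f (-(t*(8*γ)))
  have hs2 : s^2 = (16*t)⁻¹ := by
    rw [hs_def, inv_pow, mul_pow, Real.sq_sqrt ht0.le]
    norm_num
  have key : ∀ x ∈ Set.Icc (0:ℝ) s,
      16 * Real.exp (-(γ*π^2/2)) * x^2
        ≤ Real.sin (2*π*x)^2 * Real.exp (-(t*(8*γ)) * Real.sin (π*x)^2) := by
    rintro x ⟨hx0, hxs⟩
    have hx4 : x ≤ 1/4 := le_trans hxs hs4
    have h1 : 4*x ≤ Real.sin (2*π*x) := by
      have h := Real.mul_le_sin (x := 2*π*x) (by positivity) (by nlinarith)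
      calc 4*x = 2/π * (2*π*x) := by field_simp; ring
      _ ≤ Real.sin (2*π*x) := h
    have h2 : 16*x^2 ≤ Real.sin (2*π*x)^2 := by
      have := pow_le_pow_left₀ (by linarith : (0:ℝ) ≤ 4*x) h1 2
      nlinarith
    have h3 : Real.exp (-(γ*π^2/2)) ≤ Real.exp (-(t*(8*γ)) * Real.sin (π*x)^2) := by
      apply Real.exp_le_exp.2
      have hsin : Real.sin (π*x)^2 ≤ (π*x)^2 := sin_sq_le x hx0 (by linarith)
      have hx2 : x^2 ≤ s^2 := pow_le_pow_left₀ hx0 hxs 2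
      have htx : t * x^2 ≤ 1/16 := by
        rw [hs2] at hx2
        have h16 : (0:ℝ) < 16*t := by linarith
        calc t * x^2 ≤ t * (16*t)⁻¹ := by nlinarith
        _ = 1/16 := by field_simp
      nlinarith [mul_le_mul_of_nonneg_left hsin (show (0:ℝ) ≤ t*(8*γ) by positivity),
        mul_le_mul_of_nonneg_left htx (show (0:ℝ) ≤ 8*γ*π^2 by positivity)]
    calc 16 * Real.exp (-(γ*π^2/2)) * x^2 = (16*x^2) * Real.exp (-(γ*π^2/2)) := by ring
    _ ≤ Real.sin (2*π*x)^2 * Real.exp (-(t*(8*γ)) * Real.sin (π*x)^2) :=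
        mul_le_mul h2 h3 (Real.exp_pos _).le (sq_nonneg _)
  have hint : (∫ x in Set.Icc (0:ℝ) s, x^2) = s^3/3 := by
    rw [integral_Icc_eq_integral_Ioc, ← intervalIntegral.integral_of_le hs0.le]
    rw [integral_pow 2]
    norm_num
  have hcube : s^3 = t ^ (-(3:ℝ)/2) / 64 := by
    rw [hs_def, mul_inv, mul_pow, inv_pow, inv_pow, inv_sqrt_cube t ht0]
    norm_num
    ring
  calc Real.exp (-(γ*π^2/2))/12 * t ^ (-(3:ℝ)/2)
      = ∫ x in Set.Icc (0:ℝ) s, 16 * Real.exp (-(γ*π^2/2)) * x^2 := by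
        rw [show (fun x : ℝ => 16 * Real.exp (-(γ*π^2/2)) * x^2)
            = fun x : ℝ => (16 * Real.exp (-(γ*π^2/2))) * x^2 by funext x; ring]
        rw [MeasureTheory.integral_const_mul, hint, hcube]
        ring
  _ ≤ ∫ x in Set.Icc (0:ℝ) s,
        Real.sin (2*π*x)^2 * Real.exp (-(t*(8*γ)) * Real.sin (π*x)^2) := by
      apply setIntegral_mono_on
        ((continuous_const.mul (continuous_pow 2)).continuousOn.integrableOn_compact
          isCompact_Icc)
        (hfc.continuousOn.integrableOn_compact isCompact_Icc)
        measurableSet_Icc key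
  _ ≤ ∫ x in Set.Icc (0:ℝ) 1,
        Real.sin (2*π*x)^2 * Real.exp (-(t*(8*γ)) * Real.sin (π*x)^2) := by
      apply setIntegral_mono_set
        (hfc.continuousOn.integrableOn_compact isCompact_Icc)
        (ae_of_all _ (fun x => by positivity))
        ((Set.Icc_subset_Icc le_rfl hs1).eventuallyLE)

lemma factorize (d : ℕ) (hd : 1 ≤ d) (γ t : ℝ) :
    (∫ k in Set.univ.pi (fun _ : Fin d => Set.Icc (0:ℝ) 1),
        Real.sin (2*π*k ⟨0,hd⟩)^2 * ∏ j : Fin d, Real.exp (-(t*(8*γ)) * Real.sin (π*k j)^2))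
      = (∫ x in Set.Icc (0:ℝ) 1,
            Real.sin (2*π*x)^2 * Real.exp (-(t*(8*γ)) * Real.sin (π*x)^2))
        * (∫ x in Set.Icc (0:ℝ) 1, Real.exp (-(t*(8*γ)) * Real.sin (π*x)^2)) ^ (d-1) := by
  set i0 : Fin d := ⟨0, hd⟩
  set g : ℝ → ℝ := fun x => Real.exp (-(t*(8*γ)) * Real.sin (π*x)^2) with hg
  set h : Fin d → ℝ → ℝ := fun j x =>
    (Set.Icc (0:ℝ) 1).indicator (fun y => (if j = i0 then Real.sin (2*π*y)^2 else 1) * g y) x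
    with hh
  have hS : MeasurableSet (Set.univ.pi fun _ : Fin d => Set.Icc (0:ℝ) 1) :=
    MeasurableSet.univ_pi fun _ => measurableSet_Icc
  rw [← integral_indicator hS]
  have heq : (Set.univ.pi fun _ : Fin d => Set.Icc (0:ℝ) 1).indicator
      (fun k => Real.sin (2*π*k i0)^2 * ∏ j : Fin d, g (k j))
      = fun k => ∏ j : Fin d, h j (k j) := by
    funext k
    by_cases hk : k ∈ Set.univ.pi fun _ : Fin d => Set.Icc (0:ℝ) 1
    · rw [Set.indicator_of_mem hk]
      have hmem : ∀ j : Fin d, k j ∈ Set.Icc (0:ℝ) 1 := fun j => hk j (Set.mem_univ j)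
      have h1 : ∀ j : Fin d, h j (k j)
          = (if j = i0 then Real.sin (2*π*(k j))^2 else 1) * g (k j) :=
        fun j => Set.indicator_of_mem (hmem j) _
      rw [Finset.prod_congr rfl (fun j _ => h1 j), Finset.prod_mul_distrib]
      congr 1
      rw [Finset.prod_ite_eq' Finset.univ i0 (fun j => Real.sin (2*π*(k j))^2)]
      simp
    · rw [Set.indicator_of_notMem hk]
      simp only [Set.mem_pi, Set.mem_univ, forall_true_left] at hk
      push_neg at hk
      obtain ⟨j, hj⟩ := hk
      symm
      apply Finset.prod_eq_zero (Finset.mem_univ j)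
      exact Set.indicator_of_notMem hj _
  rw [heq, MeasureTheory.integral_fintype_prod_volume_eq_prod (ι := Fin d) h]
  have hj0 : (∫ x, h i0 x)
      = ∫ x in Set.Icc (0:ℝ) 1, Real.sin (2*π*x)^2 * g x := by
    rw [hh]
    simp only [if_pos rfl]
    rw [integral_indicator measurableSet_Icc]
    simp
  have hjne : ∀ j ∈ Finset.univ.erase i0, (∫ x, h j x) = ∫ x in Set.Icc (0:ℝ) 1, g x := by
    intro j hj
    rw [hh]
    simp only [if_neg (Finset.ne_of_mem_erase hj)]
    rw [integral_indicator measurableSet_Icc]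
    simp
  rw [← Finset.mul_prod_erase Finset.univ _ (Finset.mem_univ i0), hj0,
    Finset.prod_congr rfl hjne, Finset.prod_const,
    Finset.card_erase_of_mem (Finset.mem_univ i0), Finset.card_univ, Fintype.card_fin]
set_option maxHeartbeats 2000000


lemma rpow_assemble (t : ℝ) (ht : 1 ≤ t) (d : ℕ) (hd : 1 ≤ d) :
    t ^ (-(3:ℝ)/2) * (t ^ (-(1:ℝ)/2))^(d-1) = t ^ (-(d:ℝ)/2-1) := by
  have ht0 : (0:ℝ) < t := lt_of_lt_of_le one_pos ht
  rw [← Real.rpow_natCast (t ^ (-(1:ℝ)/2)) (d-1), ← Real.rpow_mul ht0.le, ← Real.rpow_add ht0]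
  congr 1
  rw [Nat.cast_sub hd]
  push_cast
  ring

/-- Pinned harmonic case: the current-current correlation
`C(t) = (E²/(4π²d)) ∫_{[0,1]^d} (∂_{k¹}ω)² e^{−tγψ(k)} dk`, with
`(∂_{k¹}ω(k))² = 4π²α² sin²(2πk¹)/(ν + 4α ∑ sin²(πk^j))` and `ψ(k) = 8∑ sin²(πk^j)`,
decays like `t^{−d/2−1}` when `ν > 0`. -/
theorem stmt_7 (d : ℕ) (hd : 1 ≤ d) (α ν E γ : ℝ) (hα : 0 < α) (hν : 0 < ν)
    (hE : 0 < E) (hγ : 0 < γ)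
    (C : ℝ → ℝ)
    (hC : ∀ t : ℝ, C t = E^2 / (4 * π^2 * d) *
      ∫ k in Set.univ.pi (fun _ : Fin d => Set.Icc (0:ℝ) 1),
        (4 * π^2 * α^2 * Real.sin (2 * π * k ⟨0, hd⟩)^2 /
            (ν + 4 * α * ∑ j : Fin d, Real.sin (π * k j)^2)) *
          Real.exp (-t * γ * (8 * ∑ j : Fin d, Real.sin (π * k j)^2))) :
    ∃ c₁ c₂ : ℝ, 0 < c₁ ∧ c₁ ≤ c₂ ∧ ∀ t : ℝ, 1 ≤ t →
      c₁ * t ^ (-(d : ℝ)/2 - 1) ≤ C t ∧ C t ≤ c₂ * t ^ (-(d : ℝ)/2 - 1) := by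
  obtain ⟨CA, hCA0, hCA⟩ := oneD_A_upper γ hγ
  obtain ⟨cA, hcA0, hcA⟩ := oneD_A_lower γ hγ
  obtain ⟨CB, hCB0, hCB⟩ := oneD_B_upper γ hγ
  obtain ⟨cB, hcB0, hcB⟩ := oneD_B_lower γ hγ
  have hπ := Real.pi_pos
  have hdR : (0:ℝ) < (d:ℝ) := by exact_mod_cast hd
  set i0 : Fin d := ⟨0, hd⟩ with hi0
  set KE : ℝ := E^2 / (4 * π^2 * d) with hKE
  have hKE0 : 0 < KE := by positivity
  set clo : ℝ := 4*π^2*α^2/(ν+4*α*d) with hclo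
  set chi : ℝ := 4*π^2*α^2/ν with hchi
  have hden_d : (0:ℝ) < ν + 4*α*d := by positivity
  have hclo0 : 0 < clo := by positivity
  have hchi0 : 0 < chi := by positivity
  refine ⟨KE * clo * (cA * cB^(d-1)), max (KE * chi * (CA * CB^(d-1))) (KE * clo * (cA * cB^(d-1))),
    by positivity, le_max_right _ _, ?_⟩
  intro t ht
  have ht0 : (0:ℝ) < t := lt_of_lt_of_le one_pos ht
  -- abbreviations
  set A : ℝ := ∫ x in Set.Icc (0:ℝ) 1,
      Real.sin (2*π*x)^2 * Real.exp (-(t*(8*γ)) * Real.sin (π*x)^2) with hA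
  set B : ℝ := ∫ x in Set.Icc (0:ℝ) 1, Real.exp (-(t*(8*γ)) * Real.sin (π*x)^2) with hB
  have hAlow := hcA t ht
  have hAup := hCA t ht
  have hBlow := hcB t ht
  have hBup := hCB t ht
  have hA0 : 0 ≤ A := le_trans (by positivity) hAlow
  have hB0 : 0 ≤ B := le_trans (by positivity) hBlow
  -- continuity infrastructure
  have hsinj : ∀ j : Fin d, Continuous (fun k : Fin d → ℝ => Real.sin (π * k j)^2) :=
    fun j => (Real.continuous_sin.comp (continuous_const.mul (continuous_apply j))).pow 2
  have hSumc : Continuous (fun k : Fin d → ℝ => ∑ j : Fin d, Real.sin (π * k j)^2) :=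
    continuous_finset_sum Finset.univ fun j _ => hsinj j
  have hgk : ∀ j : Fin d,
      Continuous (fun k : Fin d → ℝ => Real.exp (-(t*(8*γ)) * Real.sin (π * k j)^2)) :=
    fun j => Real.continuous_exp.comp (continuous_const.mul (hsinj j))
  have hsin0 : Continuous (fun k : Fin d → ℝ => Real.sin (2 * π * k i0)^2) :=
    (Real.continuous_sin.comp (continuous_const.mul (continuous_apply i0))).pow 2
  have hPc : Continuous (fun k : Fin d → ℝ =>
      Real.sin (2*π*k i0)^2 * ∏ j : Fin d, Real.exp (-(t*(8*γ)) * Real.sin (π*k j)^2)) :=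
    hsin0.mul (continuous_finset_prod Finset.univ fun j _ => hgk j)
  have hSum0 : ∀ k : Fin d → ℝ, (0:ℝ) ≤ ∑ j : Fin d, Real.sin (π * k j)^2 :=
    fun k => Finset.sum_nonneg fun j _ => sq_nonneg _
  have hSumd : ∀ k : Fin d → ℝ, (∑ j : Fin d, Real.sin (π * k j)^2) ≤ (d:ℝ) := by
    intro k
    calc (∑ j : Fin d, Real.sin (π * k j)^2) ≤ ∑ _j : Fin d, (1:ℝ) :=
          Finset.sum_le_sum fun j _ => Real.sin_sq_le_one _
    _ = d := by simp
  have hden_pos : ∀ k : Fin d → ℝ, (0:ℝ) < ν + 4 * α * ∑ j : Fin d, Real.sin (π * k j)^2 := by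
    intro k
    nlinarith [hSum0 k]
  have hFc : Continuous (fun k : Fin d → ℝ =>
      (4 * π^2 * α^2 * Real.sin (2 * π * k i0)^2 /
          (ν + 4 * α * ∑ j : Fin d, Real.sin (π * k j)^2)) *
        Real.exp (-t * γ * (8 * ∑ j : Fin d, Real.sin (π * k j)^2))) := by
    apply Continuous.mul
    · exact (continuous_const.mul hsin0).div
        (continuous_const.add (continuous_const.mul hSumc))
        (fun k => (hden_pos k).ne')
    · exact Real.continuous_exp.comp (continuous_const.mul (continuous_const.mul hSumc))
  have hScomp : IsCompact (Set.univ.pi fun _ : Fin d => Set.Icc (0:ℝ) 1) :=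
    isCompact_univ_pi fun _ => isCompact_Icc
  have hSmeas : MeasurableSet (Set.univ.pi fun _ : Fin d => Set.Icc (0:ℝ) 1) :=
    MeasurableSet.univ_pi fun _ => measurableSet_Icc
  -- pointwise bounds
  have hexp : ∀ k : Fin d → ℝ,
      Real.exp (-t * γ * (8 * ∑ j : Fin d, Real.sin (π * k j)^2))
        = ∏ j : Fin d, Real.exp (-(t*(8*γ)) * Real.sin (π * k j)^2) := by
    intro k
    rw [← Real.exp_sum]
    congr 1
    rw [← Finset.mul_sum]
    ring
  have hP0 : ∀ k : Fin d → ℝ,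
      (0:ℝ) ≤ ∏ j : Fin d, Real.exp (-(t*(8*γ)) * Real.sin (π * k j)^2) :=
    fun k => Finset.prod_nonneg fun j _ => (Real.exp_pos _).le
  have hbound : ∀ k : Fin d → ℝ,
      clo * (Real.sin (2*π*k i0)^2 * ∏ j : Fin d, Real.exp (-(t*(8*γ)) * Real.sin (π*k j)^2))
        ≤ (4 * π^2 * α^2 * Real.sin (2 * π * k i0)^2 /
            (ν + 4 * α * ∑ j : Fin d, Real.sin (π * k j)^2)) *
          Real.exp (-t * γ * (8 * ∑ j : Fin d, Real.sin (π * k j)^2)) ∧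
      (4 * π^2 * α^2 * Real.sin (2 * π * k i0)^2 /
            (ν + 4 * α * ∑ j : Fin d, Real.sin (π * k j)^2)) *
          Real.exp (-t * γ * (8 * ∑ j : Fin d, Real.sin (π * k j)^2))
        ≤ chi * (Real.sin (2*π*k i0)^2 * ∏ j : Fin d,
            Real.exp (-(t*(8*γ)) * Real.sin (π*k j)^2)) := by
    intro k
    rw [hexp k]
    have hS0 : (0:ℝ) ≤ Real.sin (2*π*k i0)^2 := sq_nonneg _
    have h1 : clo * Real.sin (2*π*k i0)^2
        ≤ 4 * π^2 * α^2 * Real.sin (2 * π * k i0)^2 /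
          (ν + 4 * α * ∑ j : Fin d, Real.sin (π * k j)^2) := by
      rw [hclo, div_mul_eq_mul_div, div_le_div_iff₀ hden_d (hden_pos k)]
      nlinarith [mul_le_mul_of_nonneg_left (hSumd k)
        (by positivity : (0:ℝ) ≤ 4*α*(4*π^2*α^2*Real.sin (2*π*k i0)^2))]
    have h2 : 4 * π^2 * α^2 * Real.sin (2 * π * k i0)^2 /
          (ν + 4 * α * ∑ j : Fin d, Real.sin (π * k j)^2)
        ≤ chi * Real.sin (2*π*k i0)^2 := by
      rw [hchi, div_mul_eq_mul_div, div_le_div_iff₀ (hden_pos k) hν]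
      nlinarith [mul_le_mul_of_nonneg_left (hSum0 k)
        (by positivity : (0:ℝ) ≤ 4*α*(4*π^2*α^2*Real.sin (2*π*k i0)^2))]
    constructor
    · calc clo * (Real.sin (2*π*k i0)^2 * ∏ j : Fin d,
            Real.exp (-(t*(8*γ)) * Real.sin (π*k j)^2))
          = (clo * Real.sin (2*π*k i0)^2) * ∏ j : Fin d,
            Real.exp (-(t*(8*γ)) * Real.sin (π*k j)^2) := by ring
      _ ≤ _ := mul_le_mul_of_nonneg_right h1 (hP0 k)
    · calc (4 * π^2 * α^2 * Real.sin (2 * π * k i0)^2 /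
            (ν + 4 * α * ∑ j : Fin d, Real.sin (π * k j)^2)) * ∏ j : Fin d,
            Real.exp (-(t*(8*γ)) * Real.sin (π*k j)^2)
          ≤ (chi * Real.sin (2*π*k i0)^2) * ∏ j : Fin d,
            Real.exp (-(t*(8*γ)) * Real.sin (π*k j)^2) := mul_le_mul_of_nonneg_right h2 (hP0 k)
      _ = _ := by ring
  -- integral sandwich
  set I : ℝ := ∫ k in Set.univ.pi (fun _ : Fin d => Set.Icc (0:ℝ) 1),
      (4 * π^2 * α^2 * Real.sin (2 * π * k i0)^2 /
          (ν + 4 * α * ∑ j : Fin d, Real.sin (π * k j)^2)) *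
        Real.exp (-t * γ * (8 * ∑ j : Fin d, Real.sin (π * k j)^2)) with hI
  have hIlow : clo * (A * B^(d-1)) ≤ I := by
    rw [← factorize d hd γ t, ← MeasureTheory.integral_const_mul]
    apply setIntegral_mono_on
      ((continuous_const.mul hPc).continuousOn.integrableOn_compact hScomp)
      (hFc.continuousOn.integrableOn_compact hScomp)
      hSmeas
    exact fun k _ => (hbound k).1
  have hIup : I ≤ chi * (A * B^(d-1)) := by
    rw [← factorize d hd γ t, ← MeasureTheory.integral_const_mul]
    apply setIntegral_mono_on
      (hFc.continuousOn.integrableOn_compact hScomp)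
      ((continuous_const.mul hPc).continuousOn.integrableOn_compact hScomp)
      hSmeas
    exact fun k _ => (hbound k).2
  have hCt : C t = KE * I := hC t
  -- power bookkeeping
  have hpow := rpow_assemble t ht d hd
  have hABlow : (cA * cB^(d-1)) * t ^ (-(d:ℝ)/2-1) ≤ A * B^(d-1) := by
    have h1 : (cA * t ^ (-(3:ℝ)/2)) * (cB * t ^ (-(1:ℝ)/2))^(d-1) ≤ A * B^(d-1) := by
      apply mul_le_mul hAlow
        (pow_le_pow_left₀ (by positivity) hBlow _) (by positivity) hA0
    calc (cA * cB^(d-1)) * t ^ (-(d:ℝ)/2-1)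
        = (cA * t ^ (-(3:ℝ)/2)) * (cB * t ^ (-(1:ℝ)/2))^(d-1) := by
          rw [← hpow, mul_pow]; ring
    _ ≤ A * B^(d-1) := h1
  have hABup : A * B^(d-1) ≤ (CA * CB^(d-1)) * t ^ (-(d:ℝ)/2-1) := by
    have h1 : A * B^(d-1) ≤ (CA * t ^ (-(3:ℝ)/2)) * (CB * t ^ (-(1:ℝ)/2))^(d-1) := by
      apply mul_le_mul hAup
        (pow_le_pow_left₀ hB0 hBup _) (pow_nonneg hB0 _) (by positivity)
    calc A * B^(d-1) ≤ (CA * t ^ (-(3:ℝ)/2)) * (CB * t ^ (-(1:ℝ)/2))^(d-1) := h1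
    _ = (CA * CB^(d-1)) * t ^ (-(d:ℝ)/2-1) := by rw [← hpow, mul_pow]; ring
  constructor
  · calc KE * clo * (cA * cB^(d-1)) * t ^ (-(d:ℝ)/2-1)
        = KE * (clo * ((cA * cB^(d-1)) * t ^ (-(d:ℝ)/2-1))) := by ring
    _ ≤ KE * (clo * (A * B^(d-1))) := by
        apply mul_le_mul_of_nonneg_left _ hKE0.le
        exact mul_le_mul_of_nonneg_left hABlow hclo0.le
    _ ≤ KE * I := mul_le_mul_of_nonneg_left hIlow hKE0.le
    _ = C t := hCt.symm
  · calc C t = KE * I := hCt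
    _ ≤ KE * (chi * (A * B^(d-1))) := mul_le_mul_of_nonneg_left hIup hKE0.le
    _ ≤ KE * (chi * ((CA * CB^(d-1)) * t ^ (-(d:ℝ)/2-1))) := by
        apply mul_le_mul_of_nonneg_left _ hKE0.le
        exact mul_le_mul_of_nonneg_left hABup hchi0.le
    _ = (KE * chi * (CA * CB^(d-1))) * t ^ (-(d:ℝ)/2-1) := by ring
    _ ≤ max (KE * chi * (CA * CB^(d-1))) (KE * clo * (cA * cB^(d-1))) * t ^ (-(d:ℝ)/2-1) := by
        apply mul_le_mul_of_nonneg_right (le_max_left _ _) (Real.rpow_nonneg ht0.le _)
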